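/- Let I be a finite interval of real numbers, Y ⊂ I a finite subset with m elements, and z a real number with 0 < z ≤ |I|. Then there exists a subinterval I' ⊂ I of length z such that |I' ∩ Y| ≤ m·z/(|I| - z) (interpreting the bound as +∞ when z = |I|). -/

import Mathlib

open scoped Classical

/-- Lemma 2(i): if `I = [a,b]` is a finite interval, `Y ⊆ I` a finite set of
`m` points, and `0 < z ≤ |I|`, then some subinterval `I' ⊆ I` of length `z`
satisfies `|I' ∩ Y| ≤ m·z/(|I| - z)` (the bound read as `+∞` when `z = |I|`;
hence stated in the product form `|I' ∩ Y|·(|I| - z) ≤ m·z`). -/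
theorem stmt_4 (a b : ℝ) (hab : a < b) (Y : Finset ℝ)
    (hY : ↑Y ⊆ Set.Icc a b) (m : ℕ) (hm : Y.card = m)
    (z : ℝ) (hz : 0 < z) (hzI : z ≤ b - a) :
    ∃ a' : ℝ, a ≤ a' ∧ a' + z ≤ b ∧
      ((Y.filter (fun y => y ∈ Set.Icc a' (a' + z))).card : ℝ) * (b - a - z)
        ≤ (m : ℝ) * z := by
  rcases eq_or_lt_of_le hzI with heq | hlt
  · refine ⟨a, le_rfl, by linarith, ?_⟩
    have h0 : b - a - z = 0 := by linarith
    rw [h0, mul_zero]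
    positivity
  · set t := (b - a) / z with ht_def
    have ht1 : 1 < t := (one_lt_div hz).mpr (by linarith)
    have ht0 : 0 < t := by linarith
    set n : ℕ := ⌈t⌉₊ - 1 with hn_def
    have hceil2 : 2 ≤ ⌈t⌉₊ := by
      have h := Nat.lt_ceil.mpr (show ((1:ℕ):ℝ) < t by exact_mod_cast ht1)
      omega
    have hn1 : 1 ≤ n := by omega
    have hncast : (n : ℝ) = (⌈t⌉₊ : ℝ) - 1 := by
      rw [hn_def, Nat.cast_sub (by omega)]; norm_num
    have hn_ge : t - 1 ≤ (n : ℝ) := by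
      rw [hncast]; linarith [Nat.le_ceil t]
    have hn_lt : (n : ℝ) < t := by
      rw [hncast]; linarith [Nat.ceil_lt_add_one ht0.le]
    have hbz : b - a = t * z := by
      rw [ht_def]; field_simp
    have hbn : b - a - z ≤ (n : ℝ) * z := by nlinarith
    have hnb : (n : ℝ) * z < b - a := by nlinarith
    set s : ℝ := (b - a - z) / ((n : ℝ) - 1) with hs_def
    have hn1R : (1 : ℝ) ≤ (n : ℝ) := by exact_mod_cast hn1
    have hs_nonneg : 0 ≤ s := div_nonneg (by linarith) (by linarith)
    have hs_mul : 2 ≤ n → ((n : ℝ) - 1) * s = b - a - z := by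
      intro h2
      have h2R : (2 : ℝ) ≤ (n : ℝ) := by exact_mod_cast h2
      rw [hs_def, mul_div_cancel₀ _ (by linarith : (n:ℝ) - 1 ≠ 0)]
    have hsz : 2 ≤ n → z < s := by
      intro h2
      have h2R : (2 : ℝ) ≤ (n : ℝ) := by exact_mod_cast h2
      have := hs_mul h2
      nlinarith
    have hks : ∀ k < n, (k : ℝ) * s ≤ b - a - z := by
      intro k hk
      rcases eq_or_lt_of_le hn1 with h1 | h2
      · have : k = 0 := by omega
        subst this; simp; linarith
      · have h2' : 2 ≤ n := h2
        have hkR : (k : ℝ) ≤ (n : ℝ) - 1 := by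
          have : (k : ℝ) + 1 ≤ (n : ℝ) := by exact_mod_cast hk
          linarith
        calc (k : ℝ) * s ≤ ((n : ℝ) - 1) * s :=
              mul_le_mul_of_nonneg_right hkR hs_nonneg
          _ = b - a - z := hs_mul h2'
    set x : ℕ → ℝ := fun k => a + k * s with hx_def
    set F : ℕ → Finset ℝ :=
      fun k => Y.filter (fun y => y ∈ Set.Icc (x k) (x k + z)) with hF_def
    have key : ∀ j k, j < k → k < n → x j + z < x k := by
      intro j k hjk hk
      have h2 : 2 ≤ n := by omega
      have hszz := hsz h2
      have hjkR : (j : ℝ) + 1 ≤ (k : ℝ) := by exact_mod_cast hjk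
      have : ((k : ℝ) - j - 1) * s ≥ 0 :=
        mul_nonneg (by linarith) hs_nonneg
      simp only [hx_def]
      nlinarith
    have hdisj : ∀ j ∈ Finset.range n, ∀ k ∈ Finset.range n, j ≠ k →
        Disjoint (F j) (F k) := by
      intro j hj k hk hjk
      rw [Finset.disjoint_left]
      intro y hyj hyk
      simp only [hF_def, Finset.mem_filter, Set.mem_Icc] at hyj hyk
      rcases lt_or_gt_of_ne hjk with h | h
      · have := key j k h (Finset.mem_range.mp hk)
        linarith [hyj.2.2, hyk.2.1]
      · have := key k j h (Finset.mem_range.mp hj)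
        linarith [hyk.2.2, hyj.2.1]
    have hsum : ∑ k ∈ Finset.range n, (F k).card ≤ m := by
      rw [← hm, ← Finset.card_biUnion hdisj]
      exact Finset.card_le_card
        (Finset.biUnion_subset.mpr fun k _ => Finset.filter_subset _ _)
    obtain ⟨k, hk, hmin⟩ := Finset.exists_min_image (Finset.range n)
      (fun k => (F k).card) ⟨0, Finset.mem_range.mpr (by omega)⟩
    have hnk : n * (F k).card ≤ m := by
      calc n * (F k).card = ∑ _j ∈ Finset.range n, (F k).card := by
            rw [Finset.sum_const, Finset.card_range, smul_eq_mul]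
        _ ≤ ∑ j ∈ Finset.range n, (F j).card :=
            Finset.sum_le_sum fun j hj => hmin j hj
        _ ≤ m := hsum
    have hkn := Finset.mem_range.mp hk
    refine ⟨x k, ?_, ?_, ?_⟩
    · simp only [hx_def]
      have : 0 ≤ (k : ℝ) * s := mul_nonneg (by positivity) hs_nonneg
      linarith
    · have := hks k hkn
      simp only [hx_def]; linarith
    · have hcF : (Y.filter (fun y => y ∈ Set.Icc (x k) (x k + z))).card
          = (F k).card := rfl
      rw [hcF]
      have hnkR : (n : ℝ) * ((F k).card : ℝ) ≤ (m : ℝ) := by exact_mod_cast hnk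
      have hc0 : (0 : ℝ) ≤ ((F k).card : ℝ) := Nat.cast_nonneg _
      nlinarith
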